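/- Let F be a finite-dimensional real inner product space, Ω ⊆ ℝ^N open, Γ : Ω → L(ℝ^N, o(F)) a connection form with skew-adjoint values, and let U : Ω → F be differentiable at x ∈ Ω. Then for every v ∈ ℝ^N one has |⟨U(x), DU(x)[v]⟩| ≤ ‖U(x)‖ · ‖D_Γ U(x)[v]‖; consequently, if U(x) ≠ 0 then the function y ↦ ‖U(y)‖ is differentiable at x and |D‖U‖(x)[v]| ≤ ‖D_Γ U(x)[v]‖ for every v ∈ ℝ^N (the diamagnetic inequality). -/

import Mathlib

open Set
open scoped RealInnerProductSpace

/-- Pointwise diamagnetic inequality: for a connection form with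
skew-adjoint values, `|⟪U(x), DU(x)[v]⟫| ≤ ‖U(x)‖ ‖D_Γ U(x)[v]‖`, and if `U(x) ≠ 0` the
norm `‖U‖` is differentiable at `x` with `|D‖U‖(x)[v]| ≤ ‖D_Γ U(x)[v]‖`. -/
theorem diamagnetic_inequality
    {F : Type*} [NormedAddCommGroup F] [InnerProductSpace ℝ F] [FiniteDimensional ℝ F]
    {N : ℕ}
    (Ω : Set (EuclideanSpace ℝ (Fin N))) (hΩ : IsOpen Ω)
    (Γ : EuclideanSpace ℝ (Fin N) → EuclideanSpace ℝ (Fin N) →L[ℝ] F →L[ℝ] F)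
    (hskew : ∀ x ∈ Ω, ∀ (v : EuclideanSpace ℝ (Fin N)) (u w : F),
      ⟪(Γ x v) u, w⟫ = -⟪u, (Γ x v) w⟫)
    (U : EuclideanSpace ℝ (Fin N) → F) (x : EuclideanSpace ℝ (Fin N)) (hx : x ∈ Ω)
    (DU : EuclideanSpace ℝ (Fin N) →L[ℝ] F)
    (hU : HasFDerivAt U DU x) :
    (∀ v : EuclideanSpace ℝ (Fin N),
      |⟪U x, DU v⟫| ≤ ‖U x‖ * ‖DU v + (Γ x v) (U x)‖) ∧
    (U x ≠ 0 → ∃ D' : EuclideanSpace ℝ (Fin N) →L[ℝ] ℝ,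
      HasFDerivAt (fun y => ‖U y‖) D' x ∧
      ∀ v : EuclideanSpace ℝ (Fin N), |D' v| ≤ ‖DU v + (Γ x v) (U x)‖) := by
  have hzero : ∀ v : EuclideanSpace ℝ (Fin N), ⟪U x, (Γ x v) (U x)⟫ = 0 := by
    intro v
    have h := hskew x hx v (U x) (U x)
    have h2 : ⟪(Γ x v) (U x), U x⟫ = ⟪U x, (Γ x v) (U x)⟫ := real_inner_comm _ _
    linarith [h, h2]
  have key : ∀ v : EuclideanSpace ℝ (Fin N),
      ⟪U x, DU v⟫ = ⟪U x, DU v + (Γ x v) (U x)⟫ := by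
    intro v
    rw [inner_add_right, hzero v, add_zero]
  have part1 : ∀ v : EuclideanSpace ℝ (Fin N),
      |⟪U x, DU v⟫| ≤ ‖U x‖ * ‖DU v + (Γ x v) (U x)‖ := by
    intro v
    rw [key v]
    exact abs_real_inner_le_norm _ _
  refine ⟨part1, fun hUx => ?_⟩
  have hsq : HasFDerivAt (fun y => ⟪U y, U y⟫)
      ((fderivInnerCLM ℝ (U x, U x)).comp <| DU.prod DU) x := hU.inner ℝ hU
  have hne : ⟪U x, U x⟫ ≠ 0 := by
    rw [real_inner_self_eq_norm_sq]
    exact pow_ne_zero 2 (norm_ne_zero_iff.mpr hUx)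
  set D' : EuclideanSpace ℝ (Fin N) →L[ℝ] ℝ :=
    (1 / (2 * Real.sqrt ⟪U x, U x⟫)) • ((fderivInnerCLM ℝ (U x, U x)).comp <| DU.prod DU)
  have hnorm : HasFDerivAt (fun y => ‖U y‖) D' x := by
    have h := hsq.sqrt hne
    have : (fun y => Real.sqrt ⟪U y, U y⟫) = fun y => ‖U y‖ := by
      funext y
      rw [real_inner_self_eq_norm_sq, Real.sqrt_sq (norm_nonneg _)]
    rwa [this] at h
  refine ⟨D', hnorm, fun v => ?_⟩
  have hsqrt : Real.sqrt ⟪U x, U x⟫ = ‖U x‖ := by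
    rw [real_inner_self_eq_norm_sq, Real.sqrt_sq (norm_nonneg _)]
  have hD'v : D' v = ⟪U x, DU v⟫ / ‖U x‖ := by
    simp only [D', ContinuousLinearMap.smul_apply, ContinuousLinearMap.comp_apply,
      ContinuousLinearMap.prod_apply, fderivInnerCLM_apply, hsqrt]
    rw [real_inner_comm (DU v) (U x)]
    field_simp
    rw [smul_eq_mul, div_mul_eq_mul_div, one_mul, mul_div_assoc',
      div_eq_iff (mul_ne_zero two_ne_zero (norm_ne_zero_iff.mpr hUx))]
    ring
  rw [hD'v, abs_div, abs_of_nonneg (norm_nonneg (U x)),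
    div_le_iff₀ (norm_pos_iff.mpr hUx)]
  calc |⟪U x, DU v⟫| ≤ ‖U x‖ * ‖DU v + (Γ x v) (U x)‖ := part1 v
    _ = ‖DU v + (Γ x v) (U x)‖ * ‖U x‖ := mul_comm _ _
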